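/- If dim V = 3, then neither G(V) nor its complement contains an induced odd cycle of length at least 5: there do not exist pairwise distinct nontrivial proper subspaces W₁, …, W_{2k+1} of V (k ≥ 2) such that consecutive subspaces (cyclically) are adjacent in G(V) and all non-consecutive pairs are non-adjacent, and likewise with adjacency replaced by non-adjacency; consequently, by the Strong Perfect Graph Theorem, G(V) is perfect. -/

import Mathlib

open Module

/-- The subspace sum graph of a vector space `V` over a field `K`. -/
def subspaceSumGraph (K V : Type*) [Field K] [AddCommGroup V] [Module K V] :
    SimpleGraph {W : Submodule K V // W ≠ ⊥ ∧ W ≠ ⊤} where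
  Adj W₁ W₂ := W₁ ≠ W₂ ∧ (W₁ : Submodule K V) ⊔ (W₂ : Submodule K V) = ⊤
  symm := by
    constructor
    intro a b h
    exact ⟨h.1.symm, by rw [sup_comm]; exact h.2⟩
  loopless := by
    constructor
    intro a h
    exact h.1 rfl

/-- A graph `G` has an induced odd cycle of length at least `5` if there are
`2k+1 ≥ 5` pairwise distinct vertices, cyclically consecutive ones adjacent and
all non-consecutive ones non-adjacent. -/
def HasInducedOddCycleGeFive {α : Type*} (G : SimpleGraph α) : Prop :=
  ∃ (k : ℕ), 2 ≤ k ∧ ∃ W : Fin (2 * k + 1) → α,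
    Function.Injective W ∧
    (∀ i : Fin (2 * k + 1), G.Adj (W i) (W (i + 1))) ∧
    (∀ i j : Fin (2 * k + 1), j ≠ i → j ≠ i + 1 → i ≠ j + 1 → ¬ G.Adj (W i) (W j))

/-- The clique number of a graph, as an extended natural number: the supremum of the
sizes of its cliques. -/
noncomputable def cliqueNumE {α : Type*} (G : SimpleGraph α) : ℕ∞ :=
  sSup ((fun m : ℕ => (m : ℕ∞)) '' {m | ∃ s : Finset α, G.IsNClique m s})

/-- A graph is perfect if for every induced subgraph the chromatic number equals the
clique number. -/
def SimpleGraph.IsPerfect {α : Type*} (G : SimpleGraph α) : Prop :=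
  ∀ s : Set α, (G.induce s).chromaticNumber = cliqueNumE (G.induce s)

section Aux

variable {K V : Type*} [Field K] [AddCommGroup V] [Module K V] [FiniteDimensional K V]

lemma dim_dichotomy_aux (hdim : finrank K V = 3) {W : Submodule K V} (h1 : W ≠ ⊥) (h2 : W ≠ ⊤) :
    finrank K W = 1 ∨ finrank K W = 2 := by
  have hlt : finrank K W < 3 := hdim ▸ Submodule.finrank_lt h2
  have hpos : finrank K W ≠ 0 := fun h => h1 (Submodule.finrank_eq_zero.1 h)
  omega

lemma line_line_aux (hdim : finrank K V = 3) {A B : Submodule K V}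
    (hA : finrank K A = 1) (hB : finrank K B = 1) : A ⊔ B ≠ ⊤ := by
  intro h
  have := Submodule.finrank_sup_add_finrank_inf_eq A B
  rw [h, finrank_top, hdim, hA, hB] at this
  omega

lemma plane_plane_aux (hdim : finrank K V = 3) {A B : Submodule K V}
    (hA : finrank K A = 2) (hB : finrank K B = 2) (hne : A ≠ B) : A ⊔ B = ⊤ := by
  have key := Submodule.finrank_sup_add_finrank_inf_eq A B
  have hinf : finrank K ↥(A ⊓ B) < 2 := by
    rcases lt_or_ge (finrank K ↥(A ⊓ B)) 2 with h | h
    · exact h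
    · exfalso
      have h1 : A ⊓ B = A := Submodule.eq_of_le_of_finrank_le inf_le_left (by omega)
      have h2 : A ⊓ B = B := Submodule.eq_of_le_of_finrank_le inf_le_right (by omega)
      exact hne (h1 ▸ h2)
  have hle : finrank K ↥(A ⊔ B) ≤ finrank K V := Submodule.finrank_le _
  exact Submodule.eq_top_of_finrank_eq (by omega)

lemma line_plane_aux (hdim : finrank K V = 3) {A B : Submodule K V}
    (hA : finrank K A = 1) (hB : finrank K B = 2) : A ⊔ B = ⊤ ↔ ¬ A ≤ B := by
  constructor
  · intro h hle
    rw [sup_eq_right.2 hle] at h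
    rw [h, finrank_top, hdim] at hB
    omega
  · intro hle
    have hinf : finrank K ↥(A ⊓ B) = 0 := by
      have h1 : A ⊓ B < A := lt_of_le_of_ne inf_le_left (fun h => hle (h ▸ inf_le_right))
      have := Submodule.finrank_lt_finrank_of_lt h1
      omega
    have key := Submodule.finrank_sup_add_finrank_inf_eq A B
    have hle2 : finrank K ↥(A ⊔ B) ≤ finrank K V := Submodule.finrank_le _
    exact Submodule.eq_top_of_finrank_eq (by omega)

end Aux

open scoped Fin.NatCast Fin.CommRing in
lemma no_cycle_abstract {α : Type*} (G : SimpleGraph α) (P : α → Prop)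
    (hclique : ∀ a b, a ≠ b → P a → P b → G.Adj a b)
    (hindep : ∀ a b, ¬P a → ¬P b → ¬G.Adj a b) :
    ¬ HasInducedOddCycleGeFive G := by
  rintro ⟨k, hk, W, hinj, hadj, hnadj⟩
  have hn : 5 ≤ 2 * k + 1 := by omega
  haveI : NeZero (2 * k + 1) := ⟨by omega⟩
  have key : ∀ c : ℕ, 0 < c → c < 2 * k + 1 → ((c : ℕ) : Fin (2 * k + 1)) ≠ 0 := by
    intro c hc1 hc2 h
    rw [Fin.natCast_eq_zero] at h
    exact absurd (Nat.le_of_dvd hc1 h) (by omega)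
  have e1 : ∀ a : Fin (2 * k + 1), a + 1 ≠ a := fun a h =>
    key 1 one_pos (by omega) (by push_cast; linear_combination h)
  have e2 : ∀ a : Fin (2 * k + 1), a + 2 ≠ a := fun a h =>
    key 2 two_pos (by omega) (by push_cast; linear_combination h)
  have e3 : ∀ a : Fin (2 * k + 1), a + 3 ≠ a := fun a h =>
    key 3 three_pos (by omega) (by push_cast; linear_combination h)
  have hline : ∃ i, ¬ P (W i) := by
    by_contra hall
    push_neg at hall
    refine hnadj 0 2 (fun h => e2 0 (by linear_combination h))
      (fun h => e1 0 (by linear_combination h))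
      (fun h => e3 0 (by linear_combination -h)) ?_
    exact hclique _ _ (fun h => e2 0 (by linear_combination -(hinj h))) (hall 0) (hall 2)
  obtain ⟨i, hi⟩ := hline
  have hp1 : P (W (i + 1)) := by
    by_contra hc
    exact hindep _ _ hi hc (hadj i)
  have hpm : P (W (i - 1)) := by
    by_contra hc
    have := hadj (i - 1)
    rw [show i - 1 + 1 = i by ring] at this
    exact hindep _ _ hc hi this
  refine hnadj (i + 1) (i - 1) (fun h => e2 (i - 1) (by linear_combination -h))
    (fun h => e3 (i - 1) (by linear_combination -h))
    (fun h => e1 i (by linear_combination h)) ?_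
  refine hclique _ _ (fun h => e2 (i - 1) (by linear_combination (hinj h))) hp1 hpm

lemma cliqueNumE_le_chromaticNumber {α : Type*} (G : SimpleGraph α) :
    cliqueNumE G ≤ G.chromaticNumber := by
  apply sSup_le
  rintro x ⟨m, ⟨t, ht⟩, rfl⟩
  have := ht.isClique.card_le_chromaticNumber
  rwa [ht.card_eq] at this

lemma nclique_le_cliqueNumE {α : Type*} {G : SimpleGraph α} {m : ℕ} {t : Finset α}
    (h : G.IsNClique m t) : (m : ℕ∞) ≤ cliqueNumE G :=
  le_sSup ⟨m, ⟨t, h⟩, rfl⟩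

lemma chrom_eq_clique {α : Type*} (G : SimpleGraph α) (P : α → Prop) (R : α → α → Prop)
    (hPP : ∀ a b, a ≠ b → P a → P b → G.Adj a b)
    (hLL : ∀ a b, ¬P a → ¬P b → ¬G.Adj a b)
    (hLP : ∀ a b, ¬P a → P b → (G.Adj a b ↔ ¬ R a b)) :
    G.chromaticNumber = cliqueNumE G := by
  classical
  have hclq : ∀ t : Finset α, (∀ a ∈ t, P a) → G.IsClique ↑t := by
    intro t ht a ha b hb hab
    exact hPP a b hab (ht a ha) (ht b hb)
  by_cases hfin : {a | P a}.Finite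
  case neg =>
    have hcl : ∀ n : ℕ, (n : ℕ∞) ≤ cliqueNumE G := by
      intro n
      obtain ⟨t, hts, hcard⟩ := Set.Infinite.exists_subset_card_eq hfin n
      exact nclique_le_cliqueNumE ⟨hclq t (fun a ha => hts ha), hcard⟩
    have topof : ∀ x : ℕ∞, (∀ n : ℕ, (n : ℕ∞) ≤ x) → x = ⊤ := by
      intro x hx
      induction x using ENat.recTopCoe with
      | top => rfl
      | coe m =>
        have := hx (m + 1)
        rw [Nat.cast_le] at this
        omega
    rw [topof _ hcl, topof _ (fun n => le_trans (hcl n) (cliqueNumE_le_chromaticNumber G))]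
  case pos =>
    set Pfin : Finset α := hfin.toFinset with hPfin
    have hmem : ∀ a, a ∈ Pfin ↔ P a := by intro a; simp [hPfin]
    have hPclique : G.IsClique ↑Pfin := hclq _ (fun a ha => (hmem a).1 ha)
    have hω_le_χ := cliqueNumE_le_chromaticNumber G
    by_cases hfree : ∃ a, ¬P a ∧ ∀ b, P b → ¬ R a b
    · obtain ⟨ℓ, hℓP, hℓR⟩ := hfree
      have hℓmem : ℓ ∉ Pfin := fun h => hℓP ((hmem ℓ).1 h)
      have hclique : G.IsNClique (Pfin.card + 1) (insert ℓ Pfin) := by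
        constructor
        · intro a ha b hb hab
          simp only [Finset.coe_insert, Set.mem_insert_iff, Finset.mem_coe] at ha hb
          rcases ha with rfl | ha <;> rcases hb with rfl | hb
          · exact absurd rfl hab
          · exact ((hLP a b hℓP ((hmem b).1 hb)).2 (hℓR b ((hmem b).1 hb)))
          · exact ((hLP b a hℓP ((hmem a).1 ha)).2 (hℓR a ((hmem a).1 ha))).symm
          · exact hPP a b hab ((hmem a).1 ha) ((hmem b).1 hb)
        · rw [Finset.card_insert_of_notMem hℓmem]
      have hcol : G.Colorable (Pfin.card + 1) := by
        have C : G.Coloring (Option ↥Pfin) := by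
          refine SimpleGraph.Coloring.mk
            (fun v => if hv : P v then some ⟨v, (hmem v).2 hv⟩
              else if hc : ∃ p, P p ∧ R v p then some ⟨hc.choose, (hmem _).2 hc.choose_spec.1⟩
              else none) ?_
          intro a b hab
          have hne := G.ne_of_adj hab
          by_cases ha : P a <;> by_cases hb : P b
          · simp only [dif_pos ha, dif_pos hb, ne_eq, Option.some_inj, Subtype.mk.injEq]
            exact hne
          · simp only [dif_pos ha, dif_neg hb]
            by_cases hc : ∃ p, P p ∧ R b p
            · simp only [dif_pos hc, ne_eq, Option.some_inj, Subtype.mk.injEq]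
              intro h
              exact (hLP b a hb ha).1 hab.symm (h ▸ hc.choose_spec.2)
            · simp [dif_neg hc]
          · simp only [dif_neg ha, dif_pos hb]
            by_cases hc : ∃ p, P p ∧ R a p
            · simp only [dif_pos hc, ne_eq, Option.some_inj, Subtype.mk.injEq]
              intro h
              exact (hLP a b ha hb).1 hab (h.symm ▸ hc.choose_spec.2)
            · simp [dif_neg hc]
          · exact absurd hab (hLL a b ha hb)
        have := C.colorable
        rwa [Fintype.card_option, Fintype.card_coe] at this
      have h1 : G.chromaticNumber ≤ (Pfin.card + 1 : ℕ) := hcol.chromaticNumber_le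
      have h2 : ((Pfin.card + 1 : ℕ) : ℕ∞) ≤ cliqueNumE G := nclique_le_cliqueNumE hclique
      exact le_antisymm (le_trans h1 h2) hω_le_χ
    · push_neg at hfree
      have hclique : G.IsNClique Pfin.card Pfin := ⟨hPclique, rfl⟩
      have hcol : G.Colorable Pfin.card := by
        have C : G.Coloring ↥Pfin := by
          refine SimpleGraph.Coloring.mk
            (fun v => if hv : P v then ⟨v, (hmem v).2 hv⟩
              else ⟨(hfree v hv).choose, (hmem _).2 (hfree v hv).choose_spec.1⟩) ?_
          intro a b hab
          have hne := G.ne_of_adj hab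
          by_cases ha : P a <;> by_cases hb : P b
          · simp only [dif_pos ha, dif_pos hb, ne_eq, Subtype.mk.injEq]
            exact hne
          · simp only [dif_pos ha, dif_neg hb, ne_eq, Subtype.mk.injEq]
            intro h
            exact (hLP b a hb ha).1 hab.symm (h ▸ (hfree b hb).choose_spec.2)
          · simp only [dif_neg ha, dif_pos hb, ne_eq, Subtype.mk.injEq]
            intro h
            exact (hLP a b ha hb).1 hab (h.symm ▸ (hfree a ha).choose_spec.2)
          · exact absurd hab (hLL a b ha hb)
        have := C.colorable
        rwa [Fintype.card_coe] at this
      have h1 : G.chromaticNumber ≤ (Pfin.card : ℕ) := hcol.chromaticNumber_le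
      have h2 : ((Pfin.card : ℕ) : ℕ∞) ≤ cliqueNumE G := nclique_le_cliqueNumE hclique
      exact le_antisymm (le_trans h1 h2) hω_le_χ

/-- If `dim V = 3`, then neither `G(V)` nor its complement contains an induced odd cycle
of length at least `5`; consequently, by the Strong Perfect Graph Theorem, `G(V)` is
perfect. -/
theorem perfect_of_dim_three (K V : Type*) [Field K] [AddCommGroup V]
    [Module K V] [FiniteDimensional K V] (hdim : finrank K V = 3) :
    ¬ HasInducedOddCycleGeFive (subspaceSumGraph K V) ∧
    ¬ HasInducedOddCycleGeFive (subspaceSumGraph K V)ᶜ ∧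
    (subspaceSumGraph K V).IsPerfect := by
  set G := subspaceSumGraph K V with hG
  have hdich : ∀ v : {W : Submodule K V // W ≠ ⊥ ∧ W ≠ ⊤},
      finrank K v.1 = 1 ∨ finrank K v.1 = 2 :=
    fun v => dim_dichotomy_aux hdim v.2.1 v.2.2
  have hvne : ∀ (a b : {W : Submodule K V // W ≠ ⊥ ∧ W ≠ ⊤}), a ≠ b → a.1 ≠ b.1 :=
    fun a b hab h => hab (Subtype.ext h)
  -- characterizations
  have hPP : ∀ a b, a ≠ b → finrank K a.1 = 2 → finrank K b.1 = 2 → G.Adj a b := by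
    intro a b hab ha hb
    exact ⟨hab, plane_plane_aux hdim ha hb (hvne a b hab)⟩
  have hLL : ∀ a b, ¬(finrank K a.1 = 2) → ¬(finrank K b.1 = 2) → ¬G.Adj a b := by
    intro a b ha hb hadj
    have ha1 : finrank K a.1 = 1 := (hdich a).resolve_right ha
    have hb1 : finrank K b.1 = 1 := (hdich b).resolve_right hb
    exact line_line_aux hdim ha1 hb1 hadj.2
  have t1 : ¬ HasInducedOddCycleGeFive G :=
    no_cycle_abstract G (fun v => finrank K v.1 = 2) hPP hLL
  have t2 : ¬ HasInducedOddCycleGeFive Gᶜ := by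
    apply no_cycle_abstract Gᶜ (fun v => finrank K v.1 = 1)
    · intro a b hab ha hb
      rw [SimpleGraph.compl_adj]
      exact ⟨hab, fun hadj => line_line_aux hdim ha hb hadj.2⟩
    · intro a b ha hb hadj
      rw [SimpleGraph.compl_adj] at hadj
      have ha2 : finrank K a.1 = 2 := (hdich a).resolve_left ha
      have hb2 : finrank K b.1 = 2 := (hdich b).resolve_left hb
      exact hadj.2 (hPP a b hadj.1 ha2 hb2)
  refine ⟨t1, t2, ?_⟩
  intro s
  apply chrom_eq_clique (G.induce s) (fun v => finrank K v.1.1 = 2)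
    (fun a b => (a.1.1 : Submodule K V) ≤ b.1.1)
  · intro a b hab ha hb
    have : a.1 ≠ b.1 := fun h => hab (Subtype.ext h)
    exact hPP a.1 b.1 this ha hb
  · intro a b ha hb hadj
    exact hLL a.1 b.1 ha hb hadj
  · intro a b ha hb
    have ha1 : finrank K a.1.1 = 1 := (hdich a.1).resolve_right ha
    constructor
    · intro hadj hle
      exact (line_plane_aux hdim ha1 hb).1 hadj.2 hle
    · intro hle
      refine ⟨?_, (line_plane_aux hdim ha1 hb).2 hle⟩
      intro h
      simp only [Function.Embedding.coe_subtype] at h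
      rw [Subtype.ext_iff] at h
      rw [h] at ha1
      omega
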